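/- arXiv:2005.05161 — 2 statements merged into one kernel-verified Lean document; each statement's English description precedes it below -/
import Mathlib

section
/- The simple graph obtained from Γ₇ by deleting the edges va₂ and vb₂ and then contracting the edge va₁ (identifying v with a₁ and deleting any resulting loops and parallel edges) is isomorphic to the complete bipartite graph K₃,₃; in particular, K₃,₃ is a minor of Γ₇. -/
/-- `H` is a minor of `G`: `H` can be obtained from a subgraph of `G` by contracting edges.
Equivalently (branch-set formulation): there is a family of nonempty, pairwise disjoint,
connected subsets of the vertices of `G`, indexed by the vertices of `H`, such that whenever
two vertices are adjacent in `H` there is an edge of `G` between the corresponding sets. -/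
def IsMinor {W V : Type} (H : SimpleGraph W) (G : SimpleGraph V) : Prop :=
  ∃ B : W → Set V,
    (∀ w, (B w).Nonempty) ∧
    (∀ w, (G.induce (B w)).Connected) ∧
    (∀ w₁ w₂, w₁ ≠ w₂ → Disjoint (B w₁) (B w₂)) ∧
    (∀ w₁ w₂, H.Adj w₁ w₂ → ∃ u ∈ B w₁, ∃ x ∈ B w₂, G.Adj u x)

/-- The complete bipartite graph `K₃,₃`. -/
def K33 : SimpleGraph (Fin 3 ⊕ Fin 3) := completeBipartiteGraph (Fin 3) (Fin 3)

/-- The vertices of the graph `Γ₇`. -/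
inductive V7 : Type
  | v | a1 | a2 | a3 | b1 | b2 | b3
  deriving DecidableEq

open V7

/-- The graph `Γ₇`: the hexagonal cycle `a₁a₂a₃b₁b₂b₃a₁`, the chords `a₂b₂` and `a₃b₃`,
and the four edges `va₁`, `vb₁`, `va₂`, `vb₂`. -/
def Gamma7 : SimpleGraph V7 :=
  SimpleGraph.fromEdgeSet
    {s(a1, a2), s(a2, a3), s(a3, b1), s(b1, b2), s(b2, b3), s(b3, a1),
     s(a2, b2), s(a3, b3),
     s(v, a1), s(v, b1), s(v, a2), s(v, b2)}

/-- The vertices of the graph obtained from `Γ₇` by contracting the edge `va₁`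
(the vertex `v` is identified with `a₁`). -/
inductive V6 : Type
  | A1 | A2 | A3 | B1 | B2 | B3
  deriving DecidableEq

/-- The map identifying `v` with `a₁`. -/
def q7 : V7 → V6
  | v => V6.A1
  | a1 => V6.A1
  | a2 => V6.A2
  | a3 => V6.A3
  | b1 => V6.B1
  | b2 => V6.B2
  | b3 => V6.B3

/-- `Γ₇` with the edges `va₂` and `vb₂` deleted. -/
def Gamma7del : SimpleGraph V7 := Gamma7.deleteEdges {s(v, a2), s(v, b2)}

/-- The graph obtained from `Γ₇` by deleting the edges `va₂` and `vb₂` and then contracting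
the edge `va₁`: the vertex `v` is identified with `a₁`, and any resulting loops and parallel
edges are deleted. -/
def Gamma7contr : SimpleGraph V6 :=
  SimpleGraph.fromRel (fun x y => ∃ u u' : V7, q7 u = x ∧ q7 u' = y ∧ Gamma7del.Adj u u')

/- ### Auxiliary material -/

instance : Fintype V7 :=
  ⟨⟨[v, a1, a2, a3, b1, b2, b3], by decide⟩, by intro x; cases x <;> decide⟩

instance : Fintype V6 :=
  ⟨⟨[V6.A1, V6.A2, V6.A3, V6.B1, V6.B2, V6.B3], by decide⟩, by intro x; cases x <;> decide⟩

/-- The edge list of `Γ₇` as a `Finset`. -/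
def gamma7Edges : Finset (Sym2 V7) :=
  {s(a1, a2), s(a2, a3), s(a3, b1), s(b1, b2), s(b2, b3), s(b3, a1),
   s(a2, b2), s(a3, b3),
   s(v, a1), s(v, b1), s(v, a2), s(v, b2)}

lemma gamma7_adj_iff (x y : V7) :
    Gamma7.Adj x y ↔ s(x, y) ∈ gamma7Edges ∧ x ≠ y := by
  simp [Gamma7, gamma7Edges, SimpleGraph.fromEdgeSet_adj, Set.mem_insert_iff]

instance : DecidableRel Gamma7.Adj := fun x y =>
  decidable_of_iff _ (gamma7_adj_iff x y).symm

lemma gamma7del_adj_iff (x y : V7) :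
    Gamma7del.Adj x y ↔ Gamma7.Adj x y ∧ s(x, y) ≠ s(v, a2) ∧ s(x, y) ≠ s(v, b2) := by
  rw [Gamma7del, SimpleGraph.deleteEdges_adj]
  simp [Set.mem_insert_iff, not_or]

instance : DecidableRel Gamma7del.Adj := fun x y =>
  decidable_of_iff _ (gamma7del_adj_iff x y).symm

instance : DecidableRel Gamma7contr.Adj := fun x y => by
  unfold Gamma7contr
  exact instDecidableAnd

instance : DecidableRel K33.Adj := fun x y => by
  unfold K33 completeBipartiteGraph
  exact instDecidableOr

/-- The vertex bijection underlying the isomorphism `Gamma7contr ≃g K33`. -/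
def isoFun : V6 → Fin 3 ⊕ Fin 3
  | V6.A1 => Sum.inl 0
  | V6.A3 => Sum.inl 1
  | V6.B2 => Sum.inl 2
  | V6.A2 => Sum.inr 0
  | V6.B1 => Sum.inr 1
  | V6.B3 => Sum.inr 2

/-- The inverse vertex bijection. -/
def isoInv : Fin 3 ⊕ Fin 3 → V6
  | Sum.inl 0 => V6.A1
  | Sum.inl 1 => V6.A3
  | Sum.inl 2 => V6.B2
  | Sum.inr 0 => V6.A2
  | Sum.inr 1 => V6.B1
  | Sum.inr 2 => V6.B3

/-- The isomorphism `Gamma7contr ≃g K33`. -/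
def gamma7Iso : Gamma7contr ≃g K33 where
  toFun := isoFun
  invFun := isoInv
  left_inv := by decide
  right_inv := by decide
  map_rel_iff' := by decide

/-- The branch sets witnessing that `K₃,₃` is a minor of `Γ₇`. -/
def branch : Fin 3 ⊕ Fin 3 → Finset V7
  | Sum.inl 0 => {v, a1}
  | Sum.inl 1 => {a3}
  | Sum.inl 2 => {b2}
  | Sum.inr 0 => {a2}
  | Sum.inr 1 => {b1}
  | Sum.inr 2 => {b3}

lemma conn_singleton (G : SimpleGraph V7) (x : V7) :
    (G.induce ({x} : Set V7)).Connected := by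
  rw [SimpleGraph.connected_iff]
  refine ⟨fun a b => ?_, ⟨⟨x, rfl⟩⟩⟩
  have : a = b := Subsingleton.elim a b
  exact this ▸ SimpleGraph.Reachable.refl a

lemma conn_pair {G : SimpleGraph V7} {x y : V7} (h : G.Adj x y) :
    (G.induce ({x, y} : Set V7)).Connected := by
  rw [SimpleGraph.connected_iff]
  refine ⟨fun a b => ?_, ⟨⟨x, Or.inl rfl⟩⟩⟩
  obtain ⟨a, ha⟩ := a
  obtain ⟨b, hb⟩ := b
  have hxy : (G.induce ({x, y} : Set V7)).Adj ⟨x, Or.inl rfl⟩ ⟨y, Or.inr rfl⟩ := h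
  rcases ha with rfl | rfl <;> rcases hb with rfl | rfl
  · rfl
  · exact hxy.reachable
  · exact hxy.symm.reachable
  · rfl

/-- The graph obtained from `Γ₇` by deleting the edges `va₂` and `vb₂` and then contracting
the edge `va₁` is isomorphic to the complete bipartite graph `K₃,₃`; in particular, `K₃,₃`
is a minor of `Γ₇`. -/
theorem Gamma7_has_K33_minor :
    Nonempty (Gamma7contr ≃g K33) ∧ IsMinor K33 Gamma7 := by
  refine ⟨⟨gamma7Iso⟩, fun w => ↑(branch w), ?_, ?_, ?_, ?_⟩
  · intro w
    rw [Finset.coe_nonempty]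
    revert w
    decide
  · intro w
    rcases w with i | i <;> fin_cases i
    · show (Gamma7.induce ((branch (Sum.inl 0) : Finset V7) : Set V7)).Connected
      rw [show ((branch (Sum.inl 0) : Finset V7) : Set V7) = {v, a1} by ext z; simp [branch]]
      exact conn_pair (by decide)
    · show (Gamma7.induce ((branch (Sum.inl 1) : Finset V7) : Set V7)).Connected
      rw [show ((branch (Sum.inl 1) : Finset V7) : Set V7) = {a3} by ext z; simp [branch]]
      exact conn_singleton _ _
    · show (Gamma7.induce ((branch (Sum.inl 2) : Finset V7) : Set V7)).Connected
      rw [show ((branch (Sum.inl 2) : Finset V7) : Set V7) = {b2} by ext z; simp [branch]]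
      exact conn_singleton _ _
    · show (Gamma7.induce ((branch (Sum.inr 0) : Finset V7) : Set V7)).Connected
      rw [show ((branch (Sum.inr 0) : Finset V7) : Set V7) = {a2} by ext z; simp [branch]]
      exact conn_singleton _ _
    · show (Gamma7.induce ((branch (Sum.inr 1) : Finset V7) : Set V7)).Connected
      rw [show ((branch (Sum.inr 1) : Finset V7) : Set V7) = {b1} by ext z; simp [branch]]
      exact conn_singleton _ _
    · show (Gamma7.induce ((branch (Sum.inr 2) : Finset V7) : Set V7)).Connected
      rw [show ((branch (Sum.inr 2) : Finset V7) : Set V7) = {b3} by ext z; simp [branch]]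
      exact conn_singleton _ _
  · intro w₁ w₂ h
    rw [Finset.disjoint_coe]
    revert h
    revert w₁ w₂
    decide
  · decide
end

section
/- Let φ be a graph automorphism of Γ₈. If φ(v₁) = v₁, then φ maps {a₁, b₁} onto {a₁, b₁} and {a₂, b₂} onto {a₂, b₂}; if φ(v₁) = v₂, then φ maps {a₁, b₁} onto {a₂, b₂} and {a₂, b₂} onto {a₁, b₁}. -/
/-- The vertices of the graph `Γ₈`. -/
inductive V8 : Type
  | v1 | v2 | a1 | a2 | a3 | b1 | b2 | b3
  deriving DecidableEq

open V8

/-- The graph `Γ₈`: the hexagonal cycle `a₁a₂a₃b₁b₂b₃a₁`, the chord `a₃b₃`,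
and the four edges `a₁v₁`, `v₁b₁`, `a₂v₂`, `v₂b₂`. -/
def Gamma8 : SimpleGraph V8 :=
  SimpleGraph.fromEdgeSet
    {s(a1, a2), s(a2, a3), s(a3, b1), s(b1, b2), s(b2, b3), s(b3, a1),
     s(a3, b3),
     s(a1, v1), s(v1, b1), s(a2, v2), s(v2, b2)}

/-- Boolean edge list for `Γ₈`. -/
def edgeList : List (V8 × V8) :=
  [(a1,a2),(a2,a3),(a3,b1),(b1,b2),(b2,b3),(b3,a1),(a3,b3),(a1,v1),(v1,b1),(a2,v2),(v2,b2)]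

/-- Boolean adjacency for `Γ₈`. -/
def adjB (u w : V8) : Bool := (u, w) ∈ edgeList || (w, u) ∈ edgeList

lemma adj_iff (u w : V8) : Gamma8.Adj u w ↔ adjB u w = true := by
  simp only [Gamma8, SimpleGraph.fromEdgeSet_adj, Set.mem_insert_iff, Set.mem_singleton_iff,
    Sym2.eq, Sym2.rel_iff', Prod.mk.injEq, Prod.swap_prod_mk, adjB, edgeList]
  cases u <;> cases w <;> decide

lemma image_nbhd (φ : Gamma8 ≃g Gamma8) (v : V8) :
    ⇑φ '' Gamma8.neighborSet v = Gamma8.neighborSet (φ v) := by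
  ext w
  constructor
  · rintro ⟨u, hu, rfl⟩
    exact φ.map_adj_iff.mpr hu
  · intro hw
    refine ⟨φ.symm w, ?_, by simp⟩
    have : Gamma8.Adj (φ v) (φ (φ.symm w)) := by simpa using hw
    exact φ.map_adj_iff.mp this

lemma nb (v : V8) (s : Set V8) (hs : ∀ w, adjB v w = true ↔ w ∈ s) :
    Gamma8.neighborSet v = s :=
  Set.ext fun w => (adj_iff v w).trans (hs w)

lemma nbv1 : Gamma8.neighborSet v1 = {a1, b1} :=
  nb _ _ fun w => by cases w <;> simp [adjB, edgeList]
lemma nbv2 : Gamma8.neighborSet v2 = {a2, b2} :=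
  nb _ _ fun w => by cases w <;> simp [adjB, edgeList]
lemma nba1 : Gamma8.neighborSet a1 = {a2, b3, v1} :=
  nb _ _ fun w => by cases w <;> simp [adjB, edgeList]
lemma nba2 : Gamma8.neighborSet a2 = {a1, a3, v2} :=
  nb _ _ fun w => by cases w <;> simp [adjB, edgeList]
lemma nba3 : Gamma8.neighborSet a3 = {a2, b1, b3} :=
  nb _ _ fun w => by cases w <;> simp [adjB, edgeList]
lemma nbb1 : Gamma8.neighborSet b1 = {a3, b2, v1} :=
  nb _ _ fun w => by cases w <;> simp [adjB, edgeList]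
lemma nbb2 : Gamma8.neighborSet b2 = {b1, b3, v2} :=
  nb _ _ fun w => by cases w <;> simp [adjB, edgeList]
lemma nbb3 : Gamma8.neighborSet b3 = {a1, a3, b2} :=
  nb _ _ fun w => by cases w <;> simp [adjB, edgeList]

lemma triple_ne_pair {x y z p q : V8} (hxy : x ≠ y) (hxz : x ≠ z) (hyz : y ≠ z) :
    ({x, y, z} : Set V8) ≠ {p, q} := by
  intro h
  have h3 : ({x, y, z} : Set V8).ncard = 3 := by
    rw [Set.ncard_insert_of_notMem (by simp [hxy, hxz]) (by simp), Set.ncard_pair hyz]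
  have h2 : ({p, q} : Set V8).ncard ≤ 2 := by
    refine le_trans (Set.ncard_insert_le _ _) ?_
    simp
  rw [h] at h3
  omega

lemma pair_image (φ : Gamma8 ≃g Gamma8) (x y : V8) :
    ⇑φ '' ({x, y} : Set V8) = {φ x, φ y} := by
  simp [Set.image_insert_eq]

/-- `v₂` can only map to a degree-2 vertex, i.e. `v₁` or `v₂`. -/
lemma phiv2 (φ : Gamma8 ≃g Gamma8) : φ v2 = v1 ∨ φ v2 = v2 := by
  have h : Gamma8.neighborSet (φ v2) = {φ a2, φ b2} := by
    rw [← image_nbhd, nbv2, pair_image]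
  cases hx : φ v2 <;> rw [hx] at h
  · exact Or.inl rfl
  · exact Or.inr rfl
  · exact absurd (nba1.symm.trans h) (triple_ne_pair (by decide) (by decide) (by decide))
  · exact absurd (nba2.symm.trans h) (triple_ne_pair (by decide) (by decide) (by decide))
  · exact absurd (nba3.symm.trans h) (triple_ne_pair (by decide) (by decide) (by decide))
  · exact absurd (nbb1.symm.trans h) (triple_ne_pair (by decide) (by decide) (by decide))
  · exact absurd (nbb2.symm.trans h) (triple_ne_pair (by decide) (by decide) (by decide))
  · exact absurd (nbb3.symm.trans h) (triple_ne_pair (by decide) (by decide) (by decide))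

/-- Let `φ` be a graph automorphism of `Γ₈`. If `φ(v₁) = v₁`, then `φ` maps `{a₁, b₁}` onto
`{a₁, b₁}` and `{a₂, b₂}` onto `{a₂, b₂}`; if `φ(v₁) = v₂`, then `φ` maps `{a₁, b₁}` onto
`{a₂, b₂}` and `{a₂, b₂}` onto `{a₁, b₁}`. -/
theorem automorphism_of_Gamma8_pair_behavior (φ : Gamma8 ≃g Gamma8) :
    (φ v1 = v1 →
      ⇑φ '' ({a1, b1} : Set V8) = {a1, b1} ∧ ⇑φ '' ({a2, b2} : Set V8) = {a2, b2}) ∧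
    (φ v1 = v2 →
      ⇑φ '' ({a1, b1} : Set V8) = {a2, b2} ∧ ⇑φ '' ({a2, b2} : Set V8) = {a1, b1}) := by
  have h1 : ⇑φ '' ({a1, b1} : Set V8) = Gamma8.neighborSet (φ v1) := by
    rw [← image_nbhd, nbv1]
  have h2 : ⇑φ '' ({a2, b2} : Set V8) = Gamma8.neighborSet (φ v2) := by
    rw [← image_nbhd, nbv2]
  constructor
  · intro hv
    have hv2 : φ v2 = v2 := by
      rcases phiv2 φ with h | h
      · exact absurd (φ.injective (h.trans hv.symm)) (by decide)
      · exact h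
    rw [h1, hv, nbv1, h2, hv2, nbv2]
    exact ⟨rfl, rfl⟩
  · intro hv
    have hv2 : φ v2 = v1 := by
      rcases phiv2 φ with h | h
      · exact h
      · exact absurd (φ.injective (h.trans hv.symm)) (by decide)
    rw [h1, hv, nbv2, h2, hv2, nbv1]
    exact ⟨rfl, rfl⟩
end
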